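/- If f : ℝ → ℝ is 11 times continuously differentiable then τ^{NW} := (f(x-2Δx) - 5f(x-Δx) + 10f(x) - 10f(x+Δx) + 5f(x+2Δx) - f(x+3Δx))² = f⁽⁵⁾(x)²Δx¹⁰ + O(Δx¹¹) as Δx → 0. -/

import Mathlib

open Filter Asymptotics Topology Set

private lemma itd_within_eq {k : ℕ} {F : ℝ → ℝ} (hF : ContDiff ℝ (k : ℕ∞) F) {s : Set ℝ}
    (hs : UniqueDiffOn ℝ s) {y : ℝ} (hy : y ∈ s) :
    iteratedDerivWithin k F s y = iteratedDeriv k F y := by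
  have h := (contDiff_iff_ftaylorSeries.mp hF).hasFTaylorSeriesUpToOn s
  have h2 := h.eq_iteratedFDerivWithin_of_uniqueDiffOn le_rfl hs hy
  rw [iteratedDerivWithin_eq_iteratedFDerivWithin, iteratedDeriv_eq_iteratedFDeriv, ← h2]
  rfl

private lemma itd_add {k : ℕ} {F G : ℝ → ℝ} (hF : ContDiff ℝ (k : ℕ∞) F)
    (hG : ContDiff ℝ (k : ℕ∞) G) (y : ℝ) :
    iteratedDeriv k (fun t => F t + G t) y = iteratedDeriv k F y + iteratedDeriv k G y := by
  simp only [← iteratedDerivWithin_univ]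
  exact iteratedDerivWithin_fun_add (Set.mem_univ y) uniqueDiffOn_univ hF.contDiffWithinAt hG.contDiffWithinAt

private lemma itd_sub {k : ℕ} {F G : ℝ → ℝ} (hF : ContDiff ℝ (k : ℕ∞) F)
    (hG : ContDiff ℝ (k : ℕ∞) G) (y : ℝ) :
    iteratedDeriv k (fun t => F t - G t) y = iteratedDeriv k F y - iteratedDeriv k G y := by
  simp only [← iteratedDerivWithin_univ]
  exact iteratedDerivWithin_sub (Set.mem_univ y) uniqueDiffOn_univ hF.contDiffWithinAt hG.contDiffWithinAt

private lemma itd_const_mul {k : ℕ} {F : ℝ → ℝ} (hF : ContDiff ℝ (k : ℕ∞) F) (c y : ℝ) :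
    iteratedDeriv k (fun t => c * F t) y = c * iteratedDeriv k F y := by
  simp only [← iteratedDerivWithin_univ]
  exact iteratedDerivWithin_const_mul (Set.mem_univ y) uniqueDiffOn_univ c hF.contDiffWithinAt

private lemma itd_const_add {k : ℕ} (hk : 0 < k) (F : ℝ → ℝ) (c y : ℝ) :
    iteratedDeriv k (fun t => c + F t) y = iteratedDeriv k F y := by
  simp only [← iteratedDerivWithin_univ]
  exact iteratedDerivWithin_const_add hk c

private lemma itd_affine {f : ℝ → ℝ} {k : ℕ} (hf : ContDiff ℝ (k : ℕ∞) f) (x a t : ℝ) :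
    iteratedDeriv k (fun s => f (x + a * s)) t = a ^ k * iteratedDeriv k f (x + a * t) := by
  have h1 : ContDiff ℝ (k : ℕ∞) (fun z => f (x + z)) :=
    hf.comp (contDiff_const.add contDiff_id)
  have h2 := iteratedDeriv_comp_const_mul h1 a
  have h3 := iteratedDeriv_comp_const_add k f x
  calc iteratedDeriv k (fun s => f (x + a * s)) t
      = a ^ k * iteratedDeriv k (fun z => f (x + z)) (a * t) := congrFun h2 t
    _ = a ^ k * iteratedDeriv k f (x + a * t) := by rw [h3]

theorem tauNW_taylor_expansion (f : ℝ → ℝ) (hf : ContDiff ℝ 11 f) (x : ℝ) :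
    (fun Δx : ℝ =>
        (f (x - 2 * Δx) - 5 * f (x - Δx) + 10 * f x
          - 10 * f (x + Δx) + 5 * f (x + 2 * Δx) - f (x + 3 * Δx)) ^ 2
        - (iteratedDeriv 5 f x) ^ 2 * Δx ^ 10)
      =O[𝓝[>] (0 : ℝ)] fun Δx => Δx ^ 11 := by
  -- the centered difference, written with arguments in affine normal form
  set G : ℝ → ℝ := fun t =>
    10 * f x + (f (x + (-2) * t) - 5 * f (x + (-1) * t) - 10 * f (x + 1 * t)
      + 5 * f (x + 2 * t) - f (x + 3 * t)) with hGdef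
  set D5 : ℝ := iteratedDeriv 5 f x with hD5
  have hf6 : ContDiff ℝ ((6 : ℕ) : ℕ∞) f := hf.of_le (by norm_num)
  have hfk : ∀ k : ℕ, k ≤ 6 → ContDiff ℝ (k : ℕ∞) f := fun k hk =>
    hf6.of_le (by exact_mod_cast hk)
  have hT : ∀ (k : ℕ), k ≤ 6 → ∀ a : ℝ, ContDiff ℝ (k : ℕ∞) (fun t => f (x + a * t)) := by
    intro k hk a
    exact (hfk k hk).comp (contDiff_const.add (contDiff_const.mul contDiff_id))
  -- iterated derivatives of G at 0
  have hGderiv : ∀ k : ℕ, 1 ≤ k → k ≤ 6 →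
      iteratedDeriv k G 0 =
        ((-2 : ℝ) ^ k - 5 * (-1) ^ k - 10 * 1 ^ k + 5 * 2 ^ k - 3 ^ k) * iteratedDeriv k f x := by
    intro k hk1 hk6
    have h2 := hT k hk6 (-2)
    have hm1 := hT k hk6 (-1)
    have h1' := hT k hk6 1
    have hp2 := hT k hk6 2
    have hp3 := hT k hk6 3
    rw [hGdef]
    rw [itd_const_add hk1]
    rw [itd_sub (((h2.sub (contDiff_const.mul hm1)).sub (contDiff_const.mul h1')).add
        (contDiff_const.mul hp2)) hp3]
    rw [itd_add ((h2.sub (contDiff_const.mul hm1)).sub (contDiff_const.mul h1'))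
        (contDiff_const.mul hp2)]
    rw [itd_sub (h2.sub (contDiff_const.mul hm1)) (contDiff_const.mul h1')]
    rw [itd_sub h2 (contDiff_const.mul hm1)]
    rw [itd_const_mul hm1, itd_const_mul h1', itd_const_mul hp2]
    rw [itd_affine (hfk k hk6) x (-2), itd_affine (hfk k hk6) x (-1),
      itd_affine (hfk k hk6) x 1, itd_affine (hfk k hk6) x 2, itd_affine (hfk k hk6) x 3]
    simp only [mul_zero, add_zero]
    ring
  have hG0 : G 0 = 0 := by simp [hGdef]; ring
  -- G is smooth
  have hG6 : ContDiff ℝ ((6 : ℕ) : ℕ∞) G := by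
    exact contDiff_const.add (((((hT 6 le_rfl (-2)).sub
      (contDiff_const.mul (hT 6 le_rfl (-1)))).sub
      (contDiff_const.mul (hT 6 le_rfl 1))).add
      (contDiff_const.mul (hT 6 le_rfl 2))).sub (hT 6 le_rfl 3))
  have hGk : ∀ k : ℕ, k ≤ 6 → ContDiff ℝ (k : ℕ∞) G := fun k hk =>
    hG6.of_le (by exact_mod_cast hk)
  -- Taylor expansion on [0,1]
  have huniq : UniqueDiffOn ℝ (Icc (0:ℝ) 1) := uniqueDiffOn_Icc one_pos
  have h0mem : (0:ℝ) ∈ Icc (0:ℝ) 1 := ⟨le_refl 0, zero_le_one⟩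
  obtain ⟨C, hC⟩ := exists_taylor_mean_remainder_bound (f := G) (a := 0) (b := 1) (n := 5)
    zero_le_one (by exact_mod_cast hG6.contDiffOn)
  have htaylor : ∀ t : ℝ, taylorWithinEval G 5 (Icc (0:ℝ) 1) 0 t = -D5 * t ^ 5 := by
    intro t
    rw [taylor_within_apply]
    have hW : ∀ k : ℕ, k ≤ 6 → iteratedDerivWithin k G (Icc (0:ℝ) 1) 0 = iteratedDeriv k G 0 :=
      fun k hk => itd_within_eq (hGk k hk) huniq h0mem
    rw [Finset.sum_range_succ, Finset.sum_range_succ, Finset.sum_range_succ,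
      Finset.sum_range_succ, Finset.sum_range_succ, Finset.sum_range_succ, Finset.sum_range_zero]
    rw [hW 0 (by norm_num), hW 1 (by norm_num), hW 2 (by norm_num), hW 3 (by norm_num),
      hW 4 (by norm_num), hW 5 (by norm_num)]
    rw [iteratedDeriv_zero, hG0,
      hGderiv 1 (by norm_num) (by norm_num), hGderiv 2 (by norm_num) (by norm_num),
      hGderiv 3 (by norm_num) (by norm_num), hGderiv 4 (by norm_num) (by norm_num),
      hGderiv 5 (by norm_num) (by norm_num)]
    simp only [smul_eq_mul, ← hD5]
    have hfac : ((Nat.factorial 5 : ℕ) : ℝ) = 120 := by norm_num [Nat.factorial]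
    norm_num [hfac]
    ring
  -- the big-O bounds
  have hmem : Ioc (0:ℝ) 1 ∈ 𝓝[>] (0:ℝ) := Ioc_mem_nhdsGT_of_mem ⟨le_refl 0, one_pos⟩
  have h1 : (fun t => G t + D5 * t ^ 5) =O[𝓝[>] (0:ℝ)] fun t => t ^ 6 := by
    rw [isBigO_iff]
    refine ⟨C, ?_⟩
    filter_upwards [hmem] with t ht
    have := hC t ⟨ht.1.le, ht.2⟩
    rw [htaylor t] at this
    have habs : ‖G t + D5 * t ^ 5‖ ≤ C * (t - 0) ^ (5+1) := by
      convert this using 2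
      · rfl
      ring
    calc ‖G t + D5 * t ^ 5‖ ≤ C * (t - 0) ^ (5+1) := habs
      _ = C * t ^ 6 := by ring
      _ = C * ‖t ^ 6‖ := by
          rw [Real.norm_eq_abs, abs_of_nonneg (pow_nonneg ht.1.le 6)]
  have h65 : (fun t : ℝ => t ^ 6) =O[𝓝[>] (0:ℝ)] fun t => t ^ 5 := by
    rw [isBigO_iff]
    refine ⟨1, ?_⟩
    filter_upwards [hmem] with t ht
    rw [Real.norm_eq_abs, Real.norm_eq_abs, abs_of_nonneg (pow_nonneg ht.1.le 6),
      abs_of_nonneg (pow_nonneg ht.1.le 5), one_mul]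
    calc t ^ 6 = t * t ^ 5 := by ring
      _ ≤ 1 * t ^ 5 := by
          apply mul_le_mul_of_nonneg_right ht.2 (pow_nonneg ht.1.le 5)
      _ = t ^ 5 := one_mul _
  have h2 : (fun t => G t - D5 * t ^ 5) =O[𝓝[>] (0:ℝ)] fun t => t ^ 5 := by
    have hconst : (fun t : ℝ => 2 * D5 * t ^ 5) =O[𝓝[>] (0:ℝ)] fun t => t ^ 5 :=
      (isBigO_refl (fun t : ℝ => t ^ 5) _).const_mul_left (2 * D5)
    have := (h1.trans h65).sub hconst
    refine this.congr_left fun t => by ring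
  have hprod := h2.mul h1
  have hfinal : (fun t => (G t - D5 * t ^ 5) * (G t + D5 * t ^ 5))
      =O[𝓝[>] (0:ℝ)] fun t : ℝ => t ^ 11 := by
    refine hprod.congr_right fun t => by ring
  refine hfinal.congr_left fun t => ?_
  rw [hGdef]
  simp only
  have e1 : x + (-2) * t = x - 2 * t := by ring
  have e2 : x + (-1) * t = x - t := by ring
  have e3 : x + 1 * t = x + t := by ring
  rw [e1, e2, e3]
  rw [hD5]
  ring
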